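/- Let c be a continuous metric on a Polish space S (continuous with respect to the underlying metric of S), and let Q = { x ↦ min(c(x, x₀), n) : x₀ ∈ S, n ∈ ℕ }. Then Q ⊂ C_b(S) and c(x,y) = sup_{u ∈ Q} (u(x) − u(y)) for all x, y ∈ S. -/
import Mathlib


open MeasureTheory

/-- If `c` is a continuous metric on a Polish space `S`, then the family
`Q = { x ↦ min(c(x,x₀), n) }` consists of bounded continuous functions and
`c(x,y) = sup_{u ∈ Q} (u(x) − u(y))`. -/
theorem continuous_metric_sup_rep
    {S : Type*} [MetricSpace S] [PolishSpace S]
    (c : S → S → ℝ)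
    (hsymm : ∀ x y, c x y = c y x)
    (hzero : ∀ x y, c x y = 0 ↔ x = y)
    (htri : ∀ x y z, c x z ≤ c x y + c y z)
    (hcont : Continuous fun p : S × S => c p.1 p.2) :
    (∀ f ∈ {f : S → ℝ | ∃ (x₀ : S) (n : ℕ), f = fun x => min (c x x₀) (n : ℝ)},
        Continuous f ∧ ∃ C : ℝ, ∀ x, |f x| ≤ C) ∧
    ∀ x y : S, IsLUB {r : ℝ | ∃ f ∈ {f : S → ℝ | ∃ (x₀ : S) (n : ℕ),
        f = fun x => min (c x x₀) (n : ℝ)}, r = f x - f y} (c x y) := by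
  have hnn : ∀ x y, 0 ≤ c x y := by
    intro x y
    have h1 : c x x = 0 := (hzero x x).2 rfl
    have h2 : c x x ≤ c x y + c y x := htri x y x
    rw [h1, ← hsymm x y] at h2
    linarith
  constructor
  · rintro f ⟨x₀, n, rfl⟩
    refine ⟨Continuous.min ?_ continuous_const, n, ?_⟩
    · exact hcont.comp (continuous_id.prodMk continuous_const)
    · intro x
      rw [abs_of_nonneg (le_min (hnn x x₀) n.cast_nonneg)]
      exact min_le_right _ _
  · intro x y
    apply IsGreatest.isLUB
    constructor
    · refine ⟨_, ⟨y, ⌈c x y⌉₊, rfl⟩, ?_⟩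
      have h0 : c y y = 0 := (hzero y y).2 rfl
      simp only [h0]
      rw [min_eq_left (Nat.le_ceil _), min_eq_left (Nat.cast_nonneg _)]
      ring
    · rintro r ⟨f, ⟨x₀, n, rfl⟩, rfl⟩
      simp only
      have hle : c x x₀ - c y x₀ ≤ c x y := by
        have := htri x y x₀
        linarith
      rcases le_total (c y x₀) (n : ℝ) with h | h
      · rw [min_eq_left h]
        calc min (c x x₀) n - c y x₀ ≤ c x x₀ - c y x₀ := by
              have := min_le_left (c x x₀) (n : ℝ); linarith
          _ ≤ c x y := hle
      · rw [min_eq_right h]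
        have : min (c x x₀) (n : ℝ) ≤ n := min_le_right _ _
        linarith [hnn x y]
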